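/- Let e : [0,∞) → (0,1] be absolutely continuous and non-increasing with r ↦ r·e(r) strictly increasing, and let Ψ_e(r) = (r^{3/2}/2) ∫₀¹ (1 - e(√r z)²) z³ dz. Then Ψ_e is convex and non-decreasing on [0,∞). -/

import Mathlib

open Real Filter Set MeasureTheory

/-- The energy dissipation potential `Ψ_e`. -/
noncomputable def dissipationPotential (e : ℝ → ℝ) (r : ℝ) : ℝ :=
  r ^ ((3 : ℝ) / 2) / 2 * ∫ z in (0 : ℝ)..1, (1 - (e (Real.sqrt r * z)) ^ 2) * z ^ 3

/-- `p u = 1 - e(√u)²`. -/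
noncomputable def pAux (e : ℝ → ℝ) (u : ℝ) : ℝ := 1 - (e (Real.sqrt u)) ^ 2

/-- `I r = ∫₀ʳ u p(u) du`. -/
noncomputable def iAux (e : ℝ → ℝ) (r : ℝ) : ℝ := ∫ u in (0:ℝ)..r, u * pAux e u

/-- `G r = I r / (4 √r)`, equal to `Ψ_e` on `[0,∞)`. -/
noncomputable def gAux (e : ℝ → ℝ) (r : ℝ) : ℝ := iAux e r / (4 * Real.sqrt r)

/-- The derivative of `G` on `(0,∞)`. -/
noncomputable def dAux (e : ℝ → ℝ) (r : ℝ) : ℝ :=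
  Real.sqrt r * pAux e r / 4 - iAux e r / (8 * (r * Real.sqrt r))

theorem stmt1 (e : ℝ → ℝ)
    (hrange : ∀ r ≥ (0 : ℝ), 0 < e r ∧ e r ≤ 1)
    (hcont : ContinuousOn e (Set.Ici 0))
    (hmono : AntitoneOn e (Set.Ici 0))
    (hθ : StrictMonoOn (fun r => r * e r) (Set.Ici 0)) :
    ConvexOn ℝ (Set.Ici 0) (dissipationPotential e) ∧
      MonotoneOn (dissipationPotential e) (Set.Ici 0) := by
  -- Continuity of p
  have hesq : Continuous (fun u : ℝ => e (Real.sqrt u)) := by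
    rw [← continuousOn_univ]
    exact hcont.comp Real.continuous_sqrt.continuousOn (fun x _ => Real.sqrt_nonneg x)
  have hpcont : Continuous (pAux e) := continuous_const.sub (hesq.pow 2)
  -- Monotonicity of p
  have hpmono : Monotone (pAux e) := by
    intro u v huv
    have h1 : Real.sqrt u ≤ Real.sqrt v := Real.sqrt_le_sqrt huv
    have h2 : e (Real.sqrt v) ≤ e (Real.sqrt u) :=
      hmono (Real.sqrt_nonneg u) (Real.sqrt_nonneg v) h1
    have h3 : 0 < e (Real.sqrt v) := (hrange _ (Real.sqrt_nonneg v)).1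
    have : e (Real.sqrt v) ^ 2 ≤ e (Real.sqrt u) ^ 2 := by nlinarith
    simp only [pAux]; linarith
  -- Bounds on p
  have hp0 : ∀ u : ℝ, 0 ≤ pAux e u := by
    intro u
    have h1 := (hrange _ (Real.sqrt_nonneg u)).1
    have h2 := (hrange _ (Real.sqrt_nonneg u)).2
    simp only [pAux]; nlinarith
  have hp1 : ∀ u : ℝ, pAux e u ≤ 1 := by
    intro u
    have h1 := (hrange _ (Real.sqrt_nonneg u)).1
    simp only [pAux]; nlinarith
  -- Integrability
  have hFcont : Continuous (fun u : ℝ => u * pAux e u) := continuous_id.mul hpcont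
  have hint : ∀ a b : ℝ, IntervalIntegrable (fun u => u * pAux e u) volume a b :=
    fun a b => hFcont.intervalIntegrable a b
  -- I is nonnegative for r ≥ 0
  have hI0 : ∀ r : ℝ, 0 ≤ r → 0 ≤ iAux e r := by
    intro r hr
    exact intervalIntegral.integral_nonneg hr
      (fun u hu => mul_nonneg hu.1 (hp0 u))
  -- Key integral bound
  have hIdiff : ∀ a b : ℝ, 0 ≤ a → a ≤ b →
      iAux e b - iAux e a ≤ pAux e b * (b ^ 2 - a ^ 2) / 2 := by
    intro a b ha hab
    have h1 : iAux e b - iAux e a = ∫ u in a..b, u * pAux e u :=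
      intervalIntegral.integral_interval_sub_left (hint 0 b) (hint 0 a)
    have h2 : (∫ u in a..b, u * pAux e u) ≤ ∫ u in a..b, u * pAux e b := by
      apply intervalIntegral.integral_mono_on hab (hint a b)
        ((continuous_id.mul continuous_const).intervalIntegrable a b)
      intro x hx
      exact mul_le_mul_of_nonneg_left (hpmono hx.2) (le_trans ha hx.1)
    have h3 : (∫ u in a..b, u * pAux e b) = pAux e b * (b ^ 2 - a ^ 2) / 2 := by
      rw [intervalIntegral.integral_mul_const, integral_id]; ring
    linarith [h1, h2, h3.symm.le]
  have hIle : ∀ b : ℝ, 0 ≤ b → iAux e b ≤ pAux e b * b ^ 2 / 2 := by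
    intro b hb
    have h0 : iAux e 0 = 0 := intervalIntegral.integral_same
    have := hIdiff 0 b le_rfl hb
    rw [h0] at this; simpa using this
  -- Derivative of I
  have hIderiv : ∀ b : ℝ, HasDerivAt (iAux e) (b * pAux e b) b := by
    intro b
    exact intervalIntegral.integral_hasDerivAt_right (hint 0 b)
      (hFcont.stronglyMeasurableAtFilter _ _) hFcont.continuousAt
  -- Derivative of G on (0,∞)
  have hGderiv : ∀ b : ℝ, 0 < b → HasDerivAt (gAux e) (dAux e b) b := by
    intro b hb
    have hsb : 0 < Real.sqrt b := Real.sqrt_pos.2 hb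
    have hss : Real.sqrt b * Real.sqrt b = b := Real.mul_self_sqrt hb.le
    have hden : HasDerivAt (fun r : ℝ => 4 * Real.sqrt r) (4 * (1 / (2 * Real.sqrt b))) b :=
      (Real.hasDerivAt_sqrt hb.ne').const_mul 4
    have h := (hIderiv b).div hden (by positivity)
    convert h using 1 <;> try rfl
    rw [dAux]
    set s := Real.sqrt b with hsdef
    set P := pAux e b with hPdef
    set Ib := iAux e b with hIbdef
    rw [← hss]
    field_simp
    ring
  -- D ≥ 0 on (0,∞)
  have hD0 : ∀ b : ℝ, 0 < b → 0 ≤ dAux e b := by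
    intro b hb
    have hsb : 0 < Real.sqrt b := Real.sqrt_pos.2 hb
    have hss : Real.sqrt b ^ 2 = b := Real.sq_sqrt hb.le
    have h1 : iAux e b / (8 * (b * Real.sqrt b)) ≤ Real.sqrt b * pAux e b / 4 := by
      rw [div_le_div_iff₀ (by positivity) (by norm_num)]
      have := hIle b hb.le
      nlinarith [mul_nonneg (hp0 b) hb.le, hss, hsb]
    rw [dAux]; linarith
  -- D is monotone on (0,∞)
  have hDmono : ∀ a : ℝ, 0 < a → ∀ b : ℝ, 0 < b → a ≤ b → dAux e a ≤ dAux e b := by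
    intro a ha b hb hab
    have hxa : Real.sqrt a ^ 2 = a := Real.sq_sqrt ha.le
    have hyb : Real.sqrt b ^ 2 = b := Real.sq_sqrt hb.le
    set x := Real.sqrt a
    set y := Real.sqrt b
    have hx0 : 0 < x := Real.sqrt_pos.2 ha
    have hy0 : 0 < y := Real.sqrt_pos.2 hb
    have hxy : x ≤ y := Real.sqrt_le_sqrt hab
    have hpa : pAux e a ≤ pAux e b := hpmono hab
    have hpb0 : 0 ≤ pAux e b := hp0 b
    have hIa0 : 0 ≤ iAux e a := hI0 a ha.le
    have hIdab : iAux e b - iAux e a ≤ pAux e b * (b ^ 2 - a ^ 2) / 2 := hIdiff a b ha.le hab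
    -- t1 : bound the big quotient
    have t1 : iAux e b / (8 * (b * y)) ≤
        (iAux e a + pAux e b * (b ^ 2 - a ^ 2) / 2) / (8 * (b * y)) := by
      apply div_le_div_of_nonneg_right ?_ (by positivity)
      linarith
    -- t2 : smaller denominator dominates
    have t2 : iAux e a / (8 * (b * y)) ≤ iAux e a / (8 * (a * x)) := by
      apply div_le_div_of_nonneg_left hIa0 (by positivity)
      have : a * x ≤ b * y := mul_le_mul hab hxy hx0.le hb.le
      linarith
    -- t3 : elementary inequality
    have t3 : pAux e b * (b ^ 2 - a ^ 2) / 2 / (8 * (b * y)) ≤ (y - x) * pAux e b / 4 := by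
      rw [div_le_div_iff₀ (by positivity) (by norm_num)]
      have h6 : (y ^ 2) ^ 2 - (x ^ 2) ^ 2 ≤ 4 * y ^ 3 * (y - x) := by
        nlinarith [mul_nonneg (sub_nonneg.2 hxy)
          (by nlinarith : (0:ℝ) ≤ 4 * y ^ 3 - (y ^ 3 + y ^ 2 * x + y * x ^ 2 + x ^ 3))]
      calc pAux e b * (b ^ 2 - a ^ 2) / 2 * 4
          = 2 * (pAux e b * ((y ^ 2) ^ 2 - (x ^ 2) ^ 2)) := by rw [← hxa, ← hyb]; ring
        _ ≤ 2 * (pAux e b * (4 * y ^ 3 * (y - x))) := by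
            have := mul_le_mul_of_nonneg_left h6 hpb0
            linarith
        _ = (y - x) * pAux e b * (8 * (b * y)) := by rw [← hyb]; ring
    have t4 : x * pAux e a ≤ x * pAux e b := mul_le_mul_of_nonneg_left hpa hx0.le
    have key : dAux e b - dAux e a =
        (y * pAux e b - x * pAux e a) / 4 - iAux e b / (8 * (b * y)) +
          iAux e a / (8 * (a * x)) := by
      rw [dAux, dAux]; ring
    have split : (iAux e a + pAux e b * (b ^ 2 - a ^ 2) / 2) / (8 * (b * y)) =
        iAux e a / (8 * (b * y)) + pAux e b * (b ^ 2 - a ^ 2) / 2 / (8 * (b * y)) := by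
      ring
    have tfin : (y * pAux e b - x * pAux e a) / 4 ≥ (y - x) * pAux e b / 4 := by
      have : y * pAux e b - x * pAux e a ≥ (y - x) * pAux e b := by nlinarith
      linarith
    linarith [t1, t2, t3, tfin, key, split.le, split.ge]
  -- Representation : dissipationPotential = gAux on [0,∞)
  have hrepr : ∀ r : ℝ, 0 ≤ r → dissipationPotential e r = gAux e r := by
    intro r hr
    rcases eq_or_lt_of_le hr with h | hrpos
    · rw [dissipationPotential, gAux, iAux, ← h]
      simp [Real.zero_rpow (by norm_num : (3:ℝ)/2 ≠ 0)]
    · have hsr : 0 < Real.sqrt r := Real.sqrt_pos.2 hrpos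
      have hss : Real.sqrt r * Real.sqrt r = r := Real.mul_self_sqrt hr
      -- change of variables
      have hd1 : ∀ z ∈ uIcc (0:ℝ) 1, HasDerivAt (fun z : ℝ => r * z ^ 2) (2 * r * z) z := by
        intro z _
        have := (hasDerivAt_pow 2 z).const_mul r
        simpa [mul_comm, mul_assoc, mul_left_comm] using this
      have hcv := intervalIntegral.integral_comp_smul_deriv (a := (0:ℝ)) (b := 1)
        (f := fun z => r * z ^ 2) (f' := fun z => 2 * r * z) (g := fun u => u * pAux e u)
        hd1 ((continuous_const.mul continuous_id).continuousOn) hFcont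
      simp only [Function.comp_apply, smul_eq_mul] at hcv
      norm_num at hcv
      have hcv' : (∫ z in (0:ℝ)..1, (2 * r * z) * ((r * z ^ 2) * pAux e (r * z ^ 2)))
          = iAux e r := by
        rw [iAux, ← hcv]
      -- integrand identification
      have hieq : ∀ z ∈ uIcc (0:ℝ) 1,
          (1 - (e (Real.sqrt r * z)) ^ 2) * z ^ 3
            = (1 / (2 * r ^ 2)) * ((2 * r * z) * ((r * z ^ 2) * pAux e (r * z ^ 2))) := by
        intro z hz
        rw [uIcc_of_le (by norm_num : (0:ℝ) ≤ 1)] at hz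
        have hz0 : 0 ≤ z := hz.1
        have hsq : Real.sqrt (r * z ^ 2) = Real.sqrt r * z := by
          rw [Real.sqrt_mul hr, Real.sqrt_sq hz0]
        rw [pAux, hsq]
        field_simp
      have hmain : (∫ z in (0:ℝ)..1, (1 - (e (Real.sqrt r * z)) ^ 2) * z ^ 3)
          = (1 / (2 * r ^ 2)) * iAux e r := by
        rw [intervalIntegral.integral_congr hieq, intervalIntegral.integral_const_mul, hcv']
      have hrpow : r ^ ((3:ℝ)/2) = r * Real.sqrt r := by
        rw [show (3:ℝ)/2 = 1 + 1/2 by norm_num, Real.rpow_add hrpos, Real.rpow_one,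
          ← Real.sqrt_eq_rpow]
      rw [dissipationPotential, gAux, hmain, hrpow]
      set s := Real.sqrt r with hsdef
      set Ir := iAux e r with hIrdef
      rw [← hss]
      field_simp
      ring
  -- Continuity of gAux on [0,∞)
  have hGcont : ContinuousOn (gAux e) (Ici 0) := by
    intro r hr
    rcases eq_or_lt_of_le (show (0:ℝ) ≤ r from hr) with h | hrpos
    · -- continuity at 0
      rw [← h]
      have hg0 : gAux e 0 = 0 := by
        rw [gAux, iAux]
        simp
      rw [ContinuousWithinAt, hg0]
      have hbound : ∀ᶠ s in nhdsWithin (0:ℝ) (Ici 0),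
          0 ≤ gAux e s ∧ gAux e s ≤ Real.sqrt s := by
        filter_upwards [Ico_mem_nhdsGE (by norm_num : (0:ℝ) < 8)] with s hs
        have hs0 : 0 ≤ s := hs.1
        constructor
        · exact div_nonneg (hI0 s hs0) (by positivity)
        · rcases eq_or_lt_of_le hs0 with h' | hspos
          · rw [gAux, iAux, ← h']; simp
          · rw [gAux, div_le_iff₀ (by positivity)]
            have h1 : iAux e s ≤ s ^ 2 / 2 := by
              have := hIle s hs0
              nlinarith [hp1 s, hp0 s, sq_nonneg s]
            have h2 : Real.sqrt s * (4 * Real.sqrt s) = 4 * s := by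
              linear_combination 4 * Real.mul_self_sqrt hs0
            rw [h2]
            nlinarith [hs.2]
      have hsq : Tendsto (fun s : ℝ => Real.sqrt s) (nhdsWithin (0:ℝ) (Ici 0)) (nhds 0) := by
        have : Tendsto Real.sqrt (nhds 0) (nhds (Real.sqrt 0)) :=
          Real.continuous_sqrt.continuousAt
        rw [Real.sqrt_zero] at this
        exact this.mono_left nhdsWithin_le_nhds
      exact tendsto_of_tendsto_of_tendsto_of_le_of_le' tendsto_const_nhds hsq
        (hbound.mono fun s h => h.1) (hbound.mono fun s h => h.2)
    · exact ((hGderiv r hrpos).continuousAt).continuousWithinAt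
  -- Differentiability on interior
  have hGdiff : DifferentiableOn ℝ (gAux e) (interior (Ici (0:ℝ))) := by
    rw [interior_Ici]
    intro x hx
    exact ((hGderiv x hx).differentiableAt).differentiableWithinAt
  -- deriv identification
  have hderiv_eq : ∀ x : ℝ, 0 < x → deriv (gAux e) x = dAux e x :=
    fun x hx => (hGderiv x hx).deriv
  -- convexity and monotonicity of gAux
  have hGconvex : ConvexOn ℝ (Ici 0) (gAux e) := by
    apply MonotoneOn.convexOn_of_deriv (convex_Ici 0) hGcont hGdiff
    rw [interior_Ici]
    intro x hx y hy hxy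
    rw [hderiv_eq x hx, hderiv_eq y hy]
    exact hDmono x hx y hy hxy
  have hGmono : MonotoneOn (gAux e) (Ici 0) := by
    apply monotoneOn_of_deriv_nonneg (convex_Ici 0) hGcont hGdiff
    rw [interior_Ici]
    intro x hx
    rw [hderiv_eq x hx]
    exact hD0 x hx
  -- transfer to dissipationPotential
  constructor
  · refine ⟨convex_Ici 0, fun x hx y hy a b ha hb hab => ?_⟩
    have hmem : a • x + b • y ∈ Ici (0:ℝ) := (convex_Ici 0) hx hy ha hb hab
    rw [hrepr _ hmem, hrepr _ hx, hrepr _ hy]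
    exact hGconvex.2 hx hy ha hb hab
  · intro x hx y hy hxy
    rw [hrepr _ hx, hrepr _ hy]
    exact hGmono hx hy hxy
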